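/- If A is an arrangement of d ≥ 4 lines with t_d = t_{d−1} = 0, then both Chern numbers of A are positive: c̄₁²(A) ≥ 1 and c̄₂(A) ≥ 1. -/

import Mathlib

open scoped BigOperators

/-- Points and lines of the projective plane over `k` (lines via duality). -/
abbrev ProjPlane (k : Type*) [Field k] := Projectivization k (Fin 3 → k)

/-- Incidence between a point `p` and a line `L` (given by its dual coefficients):
all representatives pair to zero under the standard bilinear form. -/
def Incid {k : Type*} [Field k] (p L : ProjPlane k) : Prop :=
  ∀ v ∈ p.submodule, ∀ w ∈ L.submodule, ∑ i, v i * w i = 0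

/-- Number of lines of the arrangement `A` passing through the point `p`. -/
noncomputable def linesThrough {k : Type*} [Field k]
    (A : Finset (ProjPlane k)) (p : ProjPlane k) : ℕ :=
  {L : ProjPlane k | L ∈ A ∧ Incid p L}.ncard

/-- `tm A m` is the number of `m`-points of the arrangement `A`. -/
noncomputable def tm {k : Type*} [Field k]
    (A : Finset (ProjPlane k)) (m : ℕ) : ℕ :=
  {p : ProjPlane k | linesThrough A p = m}.ncard

/-- The arrangement is trivial if all its lines pass through a common point. -/
def IsTrivial {k : Type*} [Field k] (A : Finset (ProjPlane k)) : Prop :=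
  ∃ p : ProjPlane k, ∀ L ∈ A, Incid p L

/-- First Chern number of a line arrangement. -/
noncomputable def c1sq {k : Type*} [Field k] (A : Finset (ProjPlane k)) : ℤ :=
  9 - 5 * (A.card : ℤ) +
    ∑ m ∈ Finset.Icc 2 A.card, (3 * (m : ℤ) - 4) * (tm A m : ℤ)

/-- Second Chern number of a line arrangement. -/
noncomputable def c2 {k : Type*} [Field k] (A : Finset (ProjPlane k)) : ℤ :=
  3 - 2 * (A.card : ℤ) +
    ∑ m ∈ Finset.Icc 2 A.card, ((m : ℤ) - 1) * (tm A m : ℤ)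

namespace LA

variable {k : Type*} [Field k]

def dot (v w : Fin 3 → k) : k := ∑ i, v i * w i

def crossv (v w : Fin 3 → k) : Fin 3 → k :=
  ![v 1 * w 2 - v 2 * w 1, v 2 * w 0 - v 0 * w 2, v 0 * w 1 - v 1 * w 0]

lemma dot_comm (v w : Fin 3 → k) : dot v w = dot w v := by
  simp [dot, Fin.sum_univ_three]; ring

lemma dot_cross_left (v w : Fin 3 → k) : dot v (crossv v w) = 0 := by
  simp [dot, crossv, Fin.sum_univ_three]; ring

lemma dot_cross_right (v w : Fin 3 → k) : dot w (crossv v w) = 0 := by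
  simp [dot, crossv, Fin.sum_univ_three]; ring

lemma triple (x v w : Fin 3 → k) :
    crossv x (crossv v w) = (dot x w) • v - (dot x v) • w := by
  funext i
  fin_cases i <;> simp [dot, crossv, Fin.sum_univ_three] <;> ring

/-- If the crossv product vanishes and `v ≠ 0`, then `w` is a multiple of `v`. -/
lemma eq_smul_of_cross_eq_zero {v w : Fin 3 → k} (h : crossv v w = 0) (hv : v ≠ 0) :
    ∃ a : k, w = a • v := by
  have h0 := congrFun h 0
  have h1 := congrFun h 1
  have h2 := congrFun h 2
  simp [crossv] at h0 h1 h2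
  have hv' : v 0 ≠ 0 ∨ v 1 ≠ 0 ∨ v 2 ≠ 0 := by
    by_contra hc
    push_neg at hc
    exact hv (funext fun i => by fin_cases i <;> simp [hc.1, hc.2.1, hc.2.2])
  rcases hv' with h | h | h
  · refine ⟨w 0 / v 0, funext fun i => ?_⟩
    fin_cases i
    · show w 0 = ((w 0 / v 0) • v) 0; rw [Pi.smul_apply, smul_eq_mul, div_mul_eq_mul_div, eq_div_iff h]
    · show w 1 = ((w 0 / v 0) • v) 1; rw [Pi.smul_apply, smul_eq_mul, div_mul_eq_mul_div, eq_div_iff h]; linear_combination h2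
    · show w 2 = ((w 0 / v 0) • v) 2; rw [Pi.smul_apply, smul_eq_mul, div_mul_eq_mul_div, eq_div_iff h]; linear_combination -h1
  · refine ⟨w 1 / v 1, funext fun i => ?_⟩
    fin_cases i
    · show w 0 = ((w 1 / v 1) • v) 0; rw [Pi.smul_apply, smul_eq_mul, div_mul_eq_mul_div, eq_div_iff h]; linear_combination -h2
    · show w 1 = ((w 1 / v 1) • v) 1; rw [Pi.smul_apply, smul_eq_mul, div_mul_eq_mul_div, eq_div_iff h]
    · show w 2 = ((w 1 / v 1) • v) 2; rw [Pi.smul_apply, smul_eq_mul, div_mul_eq_mul_div, eq_div_iff h]; linear_combination h0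
  · refine ⟨w 2 / v 2, funext fun i => ?_⟩
    fin_cases i
    · show w 0 = ((w 2 / v 2) • v) 0; rw [Pi.smul_apply, smul_eq_mul, div_mul_eq_mul_div, eq_div_iff h]; linear_combination h1
    · show w 1 = ((w 2 / v 2) • v) 1; rw [Pi.smul_apply, smul_eq_mul, div_mul_eq_mul_div, eq_div_iff h]; linear_combination -h0
    · show w 2 = ((w 2 / v 2) • v) 2; rw [Pi.smul_apply, smul_eq_mul, div_mul_eq_mul_div, eq_div_iff h]


lemma cross_ne_zero {v w : Fin 3 → k} (hv : v ≠ 0) (hw : w ≠ 0)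
    (h : ¬ ∃ a : k, w = a • v) : crossv v w ≠ 0 := by
  intro hc
  exact h (eq_smul_of_cross_eq_zero hc hv)

end LA

namespace PP

open LA Projectivization

variable {k : Type*} [Field k]

lemma incid_mk {v w : Fin 3 → k} (hv : v ≠ 0) (hw : w ≠ 0) :
    Incid (mk k v hv) (mk k w hw) ↔ dot v w = 0 := by
  constructor
  · intro h
    exact h v (by rw [submodule_mk]; exact Submodule.mem_span_singleton_self v)
      w (by rw [submodule_mk]; exact Submodule.mem_span_singleton_self w)
  · intro h x hx y hy
    rw [submodule_mk, Submodule.mem_span_singleton] at hx hy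
    obtain ⟨a, rfl⟩ := hx
    obtain ⟨b, rfl⟩ := hy
    have : ∑ i, (a • v) i * (b • w) i = a * b * dot v w := by
      simp [dot, Fin.sum_univ_three]; ring
    rw [this, h, mul_zero]

lemma incid_rep {p L : ProjPlane k} : Incid p L ↔ dot p.rep L.rep = 0 := by
  conv_lhs => rw [← p.mk_rep, ← L.mk_rep]
  exact incid_mk p.rep_nonzero L.rep_nonzero

lemma incid_symm {p L : ProjPlane k} (h : Incid p L) : Incid L p := by
  rw [incid_rep] at h ⊢
  rw [dot_comm]; exact h

/-- Representatives of distinct projective points are not proportional. -/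
lemma not_smul_of_ne {p q : ProjPlane k} (h : p ≠ q) : ¬ ∃ a : k, q.rep = a • p.rep := by
  rintro ⟨a, ha⟩
  apply h
  have ha0 : a ≠ 0 := by
    rintro rfl
    exact q.rep_nonzero (by simpa using ha)
  have : mk k q.rep q.rep_nonzero = mk k p.rep p.rep_nonzero := by
    rw [mk_eq_mk_iff]
    exact ⟨Units.mk0 a ha0, ha.symm⟩
  rw [p.mk_rep, q.mk_rep] at this
  exact this.symm

lemma incid_mk_left {v : Fin 3 → k} (hv : v ≠ 0) (L : ProjPlane k) :
    Incid (mk k v hv) L ↔ dot v L.rep = 0 := by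
  conv_lhs => rw [← L.mk_rep]
  exact incid_mk hv L.rep_nonzero

/-- Existence of a common point of two distinct lines. -/
lemma exists_common {L M : ProjPlane k} (h : L ≠ M) :
    ∃ p : ProjPlane k, Incid p L ∧ Incid p M := by
  have hc : crossv L.rep M.rep ≠ 0 :=
    cross_ne_zero L.rep_nonzero M.rep_nonzero (not_smul_of_ne h)
  refine ⟨mk k _ hc, ?_, ?_⟩
  · rw [incid_mk_left, dot_comm]; exact dot_cross_left _ _
  · rw [incid_mk_left, dot_comm]; exact dot_cross_right _ _

/-- Uniqueness: two distinct lines have at most one common point. -/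
lemma unique_common {p q L M : ProjPlane k} (hpq : p ≠ q)
    (h1 : Incid p L) (h2 : Incid q L) (h3 : Incid p M) (h4 : Incid q M) : L = M := by
  rw [incid_rep] at h1 h2 h3 h4
  have hc : crossv p.rep q.rep ≠ 0 :=
    cross_ne_zero p.rep_nonzero q.rep_nonzero (not_smul_of_ne hpq)
  have key : ∀ x : Fin 3 → k, dot p.rep x = 0 → dot q.rep x = 0 →
      ∃ a : k, x = a • crossv p.rep q.rep := by
    intro x hx1 hx2
    have e1 : dot x p.rep = 0 := (dot_comm x _).trans hx1
    have e2 : dot x q.rep = 0 := (dot_comm x _).trans hx2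
    have ht : crossv x (crossv p.rep q.rep) = 0 := by
      rw [triple, e1, e2]; simp
    have ht' : crossv (crossv p.rep q.rep) x = 0 := by
      have : ∀ u w : Fin 3 → k, crossv u w = - crossv w u := by
        intro u w; funext i; fin_cases i <;> simp [crossv] <;> ring
      rw [this, ht, neg_zero]
    exact eq_smul_of_cross_eq_zero ht' hc
  obtain ⟨a, ha⟩ := key L.rep h1 h2
  obtain ⟨b, hb⟩ := key M.rep h3 h4
  have ha0 : a ≠ 0 := by rintro rfl; exact L.rep_nonzero (by simpa using ha)
  have : M.rep = (b / a) • L.rep := by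
    rw [ha, hb, smul_smul]
    congr 1
    field_simp
  have := not_smul_of_ne (p := L) (q := M)
  by_contra hne
  exact this hne ⟨b / a, ‹M.rep = (b / a) • L.rep›⟩

end PP


namespace Comb

open PP Finset
open scoped Classical

variable {k : Type*} [Field k]

/-- two distinct points lie on at most one common line -/
lemma line_unique {p q L M : ProjPlane k} (hLM : L ≠ M)
    (h1 : Incid p L) (h2 : Incid p M) (h3 : Incid q L) (h4 : Incid q M) : p = q :=
  unique_common hLM (incid_symm h1) (incid_symm h2) (incid_symm h3) (incid_symm h4)

noncomputable def interPt (L M : ProjPlane k) : ProjPlane k :=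
  if h : L = M then L else Classical.choose (exists_common h)

lemma interPt_spec {L M : ProjPlane k} (h : L ≠ M) :
    Incid (interPt L M) L ∧ Incid (interPt L M) M := by
  rw [interPt, dif_neg h]
  exact Classical.choose_spec (exists_common h)

lemma eq_interPt {p L M : ProjPlane k} (h : L ≠ M) (h1 : Incid p L) (h2 : Incid p M) :
    p = interPt L M :=
  line_unique h h1 h2 (interPt_spec h).1 (interPt_spec h).2

/-- The finset of lines of `A` through `p`. -/
noncomputable def lsF (A : Finset (ProjPlane k)) (p : ProjPlane k) : Finset (ProjPlane k) :=
  A.filter (fun L => Incid p L)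

lemma linesThrough_eq (A : Finset (ProjPlane k)) (p : ProjPlane k) :
    linesThrough A p = (lsF A p).card := by
  rw [linesThrough, ← Set.ncard_coe_finset]
  congr 1
  ext L
  simp [lsF]

lemma linesThrough_le (A : Finset (ProjPlane k)) (p : ProjPlane k) :
    linesThrough A p ≤ A.card := by
  rw [linesThrough_eq]; exact card_le_card (filter_subset _ _)

/-- The finset of multiple points of `A`. -/
noncomputable def P2 (A : Finset (ProjPlane k)) : Finset (ProjPlane k) :=
  ((A ×ˢ A).image (fun q => interPt q.1 q.2)).filter (fun p => 2 ≤ linesThrough A p)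

lemma mem_P2 {A : Finset (ProjPlane k)} {p : ProjPlane k} :
    p ∈ P2 A ↔ 2 ≤ linesThrough A p := by
  constructor
  · intro h; exact (mem_filter.mp h).2
  · intro h
    rw [P2, mem_filter]
    refine ⟨?_, h⟩
    rw [linesThrough_eq] at h
    obtain ⟨L, hL, M, hM, hLM⟩ := Finset.one_lt_card.mp h
    rw [lsF, mem_filter] at hL hM
    rw [mem_image]
    exact ⟨(L, M), by simp [mem_product, hL.1, hM.1],
      (eq_interPt hLM hL.2 hM.2).symm⟩

/-- points of multiplicity ≥ 2 on a line. -/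
noncomputable def ptsOn (A : Finset (ProjPlane k)) (L : ProjPlane k) : Finset (ProjPlane k) :=
  (P2 A).filter (fun p => Incid p L)

lemma tm_eq {A : Finset (ProjPlane k)} {m : ℕ} (hm : 2 ≤ m) :
    tm A m = ((P2 A).filter (fun p => linesThrough A p = m)).card := by
  rw [tm, ← Set.ncard_coe_finset]
  congr 1
  ext p
  simp only [Set.mem_setOf_eq, coe_filter, Set.mem_setOf_eq, mem_coe, mem_P2]
  constructor
  · intro h; exact ⟨by omega, h⟩
  · intro h; exact h.2

lemma sum_tm (A : Finset (ProjPlane k)) (f : ℕ → ℤ) :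
    ∑ m ∈ Finset.Icc 2 A.card, f m * (tm A m : ℤ) = ∑ p ∈ P2 A, f (linesThrough A p) := by
  rw [← Finset.sum_fiberwise_of_maps_to (g := fun p => linesThrough A p)
    (t := Finset.Icc 2 A.card) (fun p hp => by
      rw [mem_Icc]
      exact ⟨mem_P2.mp hp, linesThrough_le A p⟩)]
  refine Finset.sum_congr rfl fun m hm => ?_
  rw [tm_eq (mem_Icc.mp hm).1]
  rw [Finset.sum_congr rfl (fun p hp => by rw [(mem_filter.mp hp).2]),
    Finset.sum_const, nsmul_eq_mul, mul_comm]

lemma lt_erase_incid {A : Finset (ProjPlane k)} {L p : ProjPlane k} (hL : L ∈ A)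
    (h : Incid p L) : linesThrough (A.erase L) p = linesThrough A p - 1 := by
  rw [linesThrough_eq, linesThrough_eq]
  have : lsF (A.erase L) p = (lsF A p).erase L := by
    ext M; simp [lsF, mem_erase]; tauto
  rw [this, card_erase_of_mem (by simp [lsF, hL, h])]

lemma lt_erase_not_incid {A : Finset (ProjPlane k)} {L p : ProjPlane k}
    (h : ¬ Incid p L) : linesThrough (A.erase L) p = linesThrough A p := by
  rw [linesThrough_eq, linesThrough_eq]
  congr 1
  ext M
  simp only [lsF, mem_filter, mem_erase]
  constructor
  · tauto
  · rintro ⟨hM, hip⟩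
    exact ⟨⟨fun e => h (e ▸ hip), hM⟩, hip⟩

lemma P2_erase {A : Finset (ProjPlane k)} {L : ProjPlane k} (hL : L ∈ A) :
    P2 (A.erase L) = (P2 A \ ptsOn A L) ∪
      ((ptsOn A L).filter (fun p => 3 ≤ linesThrough A p)) := by
  ext p
  simp only [mem_P2, mem_union, mem_sdiff, mem_filter, ptsOn, mem_P2]
  by_cases h : Incid p L
  · rw [lt_erase_incid hL h]
    constructor
    · intro h2
      exact Or.inr ⟨⟨by omega, h⟩, by omega⟩
    · rintro (⟨h1, h2⟩ | ⟨⟨h1, h2⟩, h3⟩)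
      · exact absurd ⟨h1, h⟩ h2
      · omega
  · rw [lt_erase_not_incid h]
    constructor
    · intro h2; exact Or.inl ⟨h2, fun hc => h hc.2⟩
    · rintro (⟨h1, h2⟩ | ⟨⟨h1, h2⟩, h3⟩)
      · exact h1
      · exact absurd h2 h

lemma sum_P2_erase {A : Finset (ProjPlane k)} {L : ProjPlane k} (hL : L ∈ A) (f : ℕ → ℤ) :
    ∑ p ∈ P2 (A.erase L), f (linesThrough (A.erase L) p)
      = ∑ p ∈ P2 A \ ptsOn A L, f (linesThrough A p)
        + ∑ p ∈ (ptsOn A L).filter (fun p => 3 ≤ linesThrough A p),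
            f (linesThrough A p - 1) := by
  rw [P2_erase hL, Finset.sum_union]
  · congr 1
    · refine Finset.sum_congr rfl fun p hp => ?_
      rw [lt_erase_not_incid]
      exact fun hc => (mem_sdiff.mp hp).2 (by simp [ptsOn, mem_P2, (mem_sdiff.mp hp).1, hc]
        )
    · refine Finset.sum_congr rfl fun p hp => ?_
      have hp' := mem_filter.mp hp
      have hpi : Incid p L := (mem_filter.mp hp'.1).2
      rw [lt_erase_incid hL hpi]
  · rw [Finset.disjoint_left]
    intro p hp hp2
    exact (mem_sdiff.mp hp).2 (mem_filter.mp hp2).1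

/-- the partition of ptsOn into double points and ≥ 3 points -/
lemma ptsOn_partition {A : Finset (ProjPlane k)} {L : ProjPlane k} (f : ℕ → ℤ) :
    ∑ p ∈ ptsOn A L, f (linesThrough A p)
      = ∑ p ∈ (ptsOn A L).filter (fun p => 3 ≤ linesThrough A p), f (linesThrough A p)
        + (((ptsOn A L).filter (fun p => linesThrough A p = 2)).card : ℤ) * f 2 := by
  rw [← Finset.sum_filter_add_sum_filter_not (ptsOn A L) (fun p => 3 ≤ linesThrough A p)]
  congr 1
  have : (ptsOn A L).filter (fun p => ¬ 3 ≤ linesThrough A p)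
      = (ptsOn A L).filter (fun p => linesThrough A p = 2) := by
    ext p
    simp only [mem_filter, ptsOn, mem_P2]
    constructor
    · rintro ⟨⟨h1, h2⟩, h3⟩; exact ⟨⟨h1, h2⟩, by omega⟩
    · rintro ⟨⟨h1, h2⟩, h3⟩; exact ⟨⟨h1, h2⟩, by omega⟩
  rw [this, Finset.sum_congr rfl (fun p hp => by rw [(mem_filter.mp hp).2]),
    Finset.sum_const, nsmul_eq_mul]

lemma interPt_mem_P2 {A : Finset (ProjPlane k)} {L M : ProjPlane k}
    (hL : L ∈ A) (hM : M ∈ A) (h : L ≠ M) : interPt L M ∈ P2 A := by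
  rw [mem_P2, linesThrough_eq]
  have : ({L, M} : Finset (ProjPlane k)) ⊆ lsF A (interPt L M) := by
    intro N hN
    rcases Finset.mem_insert.mp hN with rfl | hN
    · simp [lsF, hL, (interPt_spec h).1]
    · rw [Finset.mem_singleton] at hN
      subst hN
      simp [lsF, hM, (interPt_spec h).2]
  calc 2 = ({L, M} : Finset (ProjPlane k)).card := (Finset.card_pair h).symm
    _ ≤ _ := card_le_card this

lemma two_le_ptsOn {A : Finset (ProjPlane k)} {L : ProjPlane k} (hL : L ∈ A)
    (hc : 2 ≤ A.card) (hmax : ∀ p, linesThrough A p < A.card) :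
    2 ≤ (ptsOn A L).card := by
  obtain ⟨M, hM⟩ : ((A.erase L)).Nonempty := by
    rw [← Finset.card_pos, card_erase_of_mem hL]; omega
  have hML : M ≠ L := (mem_erase.mp hM).1
  have hMA : M ∈ A := (mem_erase.mp hM).2
  set q := interPt L M with hq
  have hqP : q ∈ ptsOn A L := by
    rw [ptsOn, mem_filter]
    exact ⟨interPt_mem_P2 hL hMA (Ne.symm hML), (interPt_spec (Ne.symm hML)).1⟩
  by_contra hcon
  push_neg at hcon
  have hsingle : ptsOn A L = {q} :=
    Finset.eq_singleton_iff_unique_mem.mpr ⟨hqP, fun x hx => by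
      by_contra hne
      have : ({x, q} : Finset _) ⊆ ptsOn A L := by
        intro z hz
        rcases Finset.mem_insert.mp hz with rfl | hz
        · exact hx
        · rwa [Finset.mem_singleton.mp hz]
      have := card_le_card this
      rw [Finset.card_pair hne] at this
      omega⟩
  -- every line of A passes through q
  have hall : ∀ N ∈ A, Incid q N := by
    intro N hN
    by_cases hNL : N = L
    · subst hNL; exact (interPt_spec (Ne.symm hML)).1
    · have : interPt L N ∈ ptsOn A L := by
        rw [ptsOn, mem_filter]
        exact ⟨interPt_mem_P2 hL hN (Ne.symm hNL), (interPt_spec (Ne.symm hNL)).1⟩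
      rw [hsingle, Finset.mem_singleton] at this
      rw [← this]
      exact (interPt_spec (Ne.symm hNL)).2
  have : linesThrough A q = A.card := by
    rw [linesThrough_eq]
    congr 1
    rw [lsF, Finset.filter_eq_self]
    exact hall
  exact absurd this (Nat.ne_of_lt (hmax q))

lemma exists_good_line {A : Finset (ProjPlane k)}
    (hmax3 : ∀ p, linesThrough A p + 3 ≤ A.card) (hc : 2 ≤ A.card) :
    ∃ L ∈ A, 3 ≤ (ptsOn A L).card := by
  have hmax : ∀ p, linesThrough A p < A.card := fun p => by have := hmax3 p; omega
  by_contra hcon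
  push_neg at hcon
  obtain ⟨L₀, hL₀⟩ : A.Nonempty := Finset.card_pos.mp (by omega)
  have h2 : (ptsOn A L₀).card = 2 :=
    le_antisymm (by have := hcon L₀ hL₀; omega) (two_le_ptsOn hL₀ hc hmax)
  obtain ⟨x, y, hxy, hset⟩ := Finset.card_eq_two.mp h2
  have hxP : x ∈ ptsOn A L₀ := by rw [hset]; simp
  have hyP : y ∈ ptsOn A L₀ := by rw [hset]; simp
  have hxL : Incid x L₀ := (mem_filter.mp hxP).2
  have hyL : Incid y L₀ := (mem_filter.mp hyP).2
  have hx2 : 2 ≤ linesThrough A x := mem_P2.mp (mem_filter.mp hxP).1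
  -- every line is through x or y
  have hcover : A ⊆ lsF A x ∪ lsF A y := by
    intro N hN
    by_cases hNL : N = L₀
    · subst hNL
      simp [lsF, mem_union, mem_filter, hN, hxL]
    · have : interPt L₀ N ∈ ptsOn A L₀ := by
        rw [ptsOn, mem_filter]
        exact ⟨interPt_mem_P2 hL₀ hN (Ne.symm hNL), (interPt_spec (Ne.symm hNL)).1⟩
      rw [hset] at this
      rcases Finset.mem_insert.mp this with he | he
      · exact mem_union_left _ (by
          rw [lsF, mem_filter]
          exact ⟨hN, he ▸ (interPt_spec (Ne.symm hNL)).2⟩)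
      · rw [Finset.mem_singleton] at he
        exact mem_union_right _ (by
          rw [lsF, mem_filter]
          exact ⟨hN, he ▸ (interPt_spec (Ne.symm hNL)).2⟩)
  have hsum : A.card + 1 ≤ linesThrough A x + linesThrough A y := by
    have h1 : A.card ≤ (lsF A x ∪ lsF A y).card := card_le_card hcover
    have h2' : 1 ≤ (lsF A x ∩ lsF A y).card := by
      rw [Nat.one_le_iff_ne_zero, ← Nat.pos_iff_ne_zero, card_pos]
      exact ⟨L₀, by simp [lsF, mem_inter, mem_filter, hL₀, hxL, hyL]⟩
    have := Finset.card_union_add_card_inter (lsF A x) (lsF A y)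
    rw [linesThrough_eq, linesThrough_eq]
    omega
  have hy4 : 4 ≤ linesThrough A y := by
    have := hmax3 x; omega
  -- pick M ≠ L₀ through x
  obtain ⟨M, hM⟩ : ((lsF A x).erase L₀).Nonempty := by
    rw [← Finset.card_pos, card_erase_of_mem (by simp [lsF, hL₀, hxL])]
    rw [linesThrough_eq] at hx2
    omega
  have hML : M ≠ L₀ := (mem_erase.mp hM).1
  have hMA : M ∈ A := (mem_filter.mp (mem_erase.mp hM).2).1
  have hxM : Incid x M := (mem_filter.mp (mem_erase.mp hM).2).2
  have hyM : ¬ Incid y M := fun hc' => hML (unique_common hxy hxM hc' hxL hyL)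
  -- the lines through y other than L₀ cut ≥ 3 points on M
  have hinj : Set.InjOn (fun N => interPt M N) ((lsF A y).erase L₀) := by
    intro N hN N' hN' he
    simp only at he
    have hNy : Incid y N := (mem_filter.mp (mem_erase.mp hN).2).2
    have hN'y : Incid y N' := (mem_filter.mp (mem_erase.mp hN').2).2
    have hMN : M ≠ N := fun e => hyM (e ▸ hNy)
    have hMN' : M ≠ N' := fun e => hyM (e ▸ hN'y)
    have hqy : interPt M N ≠ y := fun e => hyM (e ▸ (interPt_spec hMN).1)
    refine unique_common (Ne.symm hqy) hNy ?_ hN'y ?_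
    · exact (interPt_spec hMN).2
    · rw [he]; exact (interPt_spec hMN').2
  have hmaps : ∀ N ∈ (lsF A y).erase L₀, interPt M N ∈ ptsOn A M := by
    intro N hN
    have hNy : Incid y N := (mem_filter.mp (mem_erase.mp hN).2).2
    have hNA : N ∈ A := (mem_filter.mp (mem_erase.mp hN).2).1
    have hMN : M ≠ N := fun e => hyM (e ▸ hNy)
    rw [ptsOn, mem_filter]
    exact ⟨interPt_mem_P2 hMA hNA hMN, (interPt_spec hMN).1⟩
  have hcard : ((lsF A y).erase L₀).card ≤ (ptsOn A M).card :=
    Finset.card_le_card_of_injOn _ hmaps hinj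
  have hyL0 : L₀ ∈ lsF A y := by simp [lsF, hL₀, hyL]
  rw [card_erase_of_mem hyL0] at hcard
  rw [linesThrough_eq] at hy4
  have := hcon M hMA
  omega

lemma direct_sum_bound {A : Finset (ProjPlane k)} (hd : 4 ≤ A.card)
    (hmax : ∀ q, linesThrough A q + 2 ≤ A.card)
    {p : ProjPlane k} (hp : linesThrough A p + 2 = A.card)
    (g : ℕ → ℤ) (a b : ℤ) (ha : ∀ m, 2 ≤ m → a ≤ g m) (hb : ∀ m, 3 ≤ m → b ≤ g m)
    (ha0 : 0 ≤ a) :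
    g (A.card - 2) + (2 * (A.card : ℤ) - 3) * a ≤ ∑ q ∈ P2 A, g (linesThrough A q)
    ∨ (5 ≤ A.card ∧
       g (A.card - 2) + b + (2 * (A.card : ℤ) - 6) * a ≤ ∑ q ∈ P2 A, g (linesThrough A q)) := by
  set d := A.card with hdd
  set Pencil := lsF A p with hPen
  have hPenCard : Pencil.card = d - 2 := by
    rw [hPen, ← linesThrough_eq]; omega
  have hRest : (A.filter (fun L => ¬ Incid p L)).card = 2 := by
    have := Finset.card_filter_add_card_filter_not (s := A) (p := fun L => Incid p L)
    have h1 : (A.filter (fun L => Incid p L)).card = d - 2 := hPenCard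
    omega
  obtain ⟨L, M, hLM, hLMset⟩ := Finset.card_eq_two.mp hRest
  have hLmem : L ∈ A.filter (fun L => ¬ Incid p L) := by rw [hLMset]; simp
  have hMmem : M ∈ A.filter (fun L => ¬ Incid p L) := by rw [hLMset]; simp
  have hLA : L ∈ A := (mem_filter.mp hLmem).1
  have hMA : M ∈ A := (mem_filter.mp hMmem).1
  have hpL : ¬ Incid p L := (mem_filter.mp hLmem).2
  have hpM : ¬ Incid p M := (mem_filter.mp hMmem).2
  set x := interPt L M with hx
  have hxL : Incid x L := (interPt_spec hLM).1
  have hxM : Incid x M := (interPt_spec hLM).2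
  have hpx : p ≠ x := fun e => hpL (e ▸ hxL)
  have hPenA : ∀ P ∈ Pencil, P ∈ A := fun P hP => (mem_filter.mp hP).1
  have hPenp : ∀ P ∈ Pencil, Incid p P := fun P hP => (mem_filter.mp hP).2
  have hLP : ∀ P ∈ Pencil, L ≠ P := fun P hP e => hpL (e ▸ hPenp P hP)
  have hMP : ∀ P ∈ Pencil, M ≠ P := fun P hP e => hpM (e ▸ hPenp P hP)
  have hpP2 : p ∈ P2 A := mem_P2.mpr (by omega)
  have hxP2 : x ∈ P2 A := interPt_mem_P2 hLA hMA hLM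
  -- the images of the pencil on L and on M
  set imgL := Pencil.image (fun P => interPt L P) with himgL
  set imgM := Pencil.image (fun P => interPt M P) with himgM
  have himgL_spec : ∀ q ∈ imgL, q ∈ P2 A ∧ Incid q L ∧ q ≠ p ∧ ∃ P ∈ Pencil, Incid q P := by
    intro q hq
    obtain ⟨P, hP, rfl⟩ := Finset.mem_image.mp hq
    exact ⟨interPt_mem_P2 hLA (hPenA P hP) (hLP P hP), (interPt_spec (hLP P hP)).1,
      fun e => hpL (e ▸ (interPt_spec (hLP P hP)).1),
      P, hP, (interPt_spec (hLP P hP)).2⟩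
  have himgM_spec : ∀ q ∈ imgM, q ∈ P2 A ∧ Incid q M ∧ q ≠ p ∧ ∃ P ∈ Pencil, Incid q P := by
    intro q hq
    obtain ⟨P, hP, rfl⟩ := Finset.mem_image.mp hq
    exact ⟨interPt_mem_P2 hMA (hPenA P hP) (hMP P hP), (interPt_spec (hMP P hP)).1,
      fun e => hpM (e ▸ (interPt_spec (hMP P hP)).1),
      P, hP, (interPt_spec (hMP P hP)).2⟩
  have hinjL : Set.InjOn (fun P => interPt L P) Pencil := by
    intro P hP P' hP' he
    simp only at he
    have hq : interPt L P ≠ p := fun e => hpL (e ▸ (interPt_spec (hLP P hP)).1)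
    refine unique_common (Ne.symm hq) (hPenp P hP) ?_ (hPenp P' hP') ?_
    · exact (interPt_spec (hLP P hP)).2
    · rw [he]; exact (interPt_spec (hLP P' hP')).2
  have hinjM : Set.InjOn (fun P => interPt M P) Pencil := by
    intro P hP P' hP' he
    simp only at he
    have hq : interPt M P ≠ p := fun e => hpM (e ▸ (interPt_spec (hMP P hP)).1)
    refine unique_common (Ne.symm hq) (hPenp P hP) ?_ (hPenp P' hP') ?_
    · exact (interPt_spec (hMP P hP)).2
    · rw [he]; exact (interPt_spec (hMP P' hP')).2
  have hcardL : imgL.card = d - 2 := by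
    rw [himgL, Finset.card_image_of_injOn hinjL, hPenCard]
  have hcardM : imgM.card = d - 2 := by
    rw [himgM, Finset.card_image_of_injOn hinjM, hPenCard]
  have hinter : ∀ q, q ∈ imgL → q ∈ imgM → q = x := by
    intro q h1 h2
    exact eq_interPt hLM (himgL_spec q h1).2.1 (himgM_spec q h2).2.1
  have hga : ∀ q ∈ P2 A, a ≤ g (linesThrough A q) := fun q hq => ha _ (mem_P2.mp hq)
  have hg0 : ∀ q ∈ P2 A, 0 ≤ g (linesThrough A q) := fun q hq => le_trans ha0 (hga q hq)
  have hltp : linesThrough A p = d - 2 := by omega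
  by_cases hxPen : ∃ P ∈ Pencil, Incid x P
  · -- Case B : x lies on a pencil line
    right
    obtain ⟨P₁, hP₁, hxP₁⟩ := hxPen
    have hx3 : 3 ≤ linesThrough A x := by
      rw [linesThrough_eq]
      have hsub : ({L, M, P₁} : Finset (ProjPlane k)) ⊆ lsF A x := by
        intro N hN
        simp only [Finset.mem_insert, Finset.mem_singleton] at hN
        rcases hN with rfl | rfl | rfl
        · simp [lsF, hLA, hxL]
        · simp [lsF, hMA, hxM]
        · exact mem_filter.mpr ⟨hPenA _ hP₁, hxP₁⟩
      have h3 : ({L, M, P₁} : Finset (ProjPlane k)).card = 3 := by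
        rw [Finset.card_insert_of_notMem (by simp [hLM, hLP P₁ hP₁]),
          Finset.card_pair (hMP P₁ hP₁)]
      calc 3 = ({L, M, P₁} : Finset (ProjPlane k)).card := h3.symm
        _ ≤ _ := card_le_card hsub
    have hd5 : 5 ≤ d := by have := hmax x; omega
    refine ⟨hd5, ?_⟩
    have hxL' : x ∈ imgL := Finset.mem_image.mpr ⟨P₁, hP₁,
      (eq_interPt (hLP P₁ hP₁) hxL hxP₁).symm⟩
    have hxM' : x ∈ imgM := Finset.mem_image.mpr ⟨P₁, hP₁,
      (eq_interPt (hMP P₁ hP₁) hxM hxP₁).symm⟩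
    set T := imgL ∪ imgM.erase x with hT
    have hdisj : Disjoint imgL (imgM.erase x) := by
      rw [Finset.disjoint_left]
      intro q h1 h2
      exact (Finset.mem_erase.mp h2).1 (hinter q h1 (Finset.mem_erase.mp h2).2)
    have hTcard : T.card = 2 * d - 5 := by
      rw [hT, Finset.card_union_of_disjoint hdisj, hcardL,
        Finset.card_erase_of_mem hxM', hcardM]
      omega
    have hTP2 : T ⊆ P2 A := by
      intro q hq
      rcases Finset.mem_union.mp hq with h | h
      · exact (himgL_spec q h).1
      · exact (himgM_spec q (Finset.mem_erase.mp h).2).1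
    have hpT : p ∉ T := by
      intro hq
      rcases Finset.mem_union.mp hq with h | h
      · exact (himgL_spec p h).2.2.1 rfl
      · exact (himgM_spec p (Finset.mem_erase.mp h).2).2.2.1 rfl
    have hxT : x ∈ T := Finset.mem_union_left _ hxL'
    -- sum over T
    have hsumT : b + ((2 * d - 6 : ℕ) : ℤ) * a ≤ ∑ q ∈ T, g (linesThrough A q) := by
      rw [← Finset.add_sum_erase _ _ hxT]
      have h1 : b ≤ g (linesThrough A x) := hb _ hx3
      have h2 : ((T.erase x).card : ℤ) * a ≤ ∑ q ∈ T.erase x, g (linesThrough A q) := by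
        rw [← nsmul_eq_mul]
        refine Finset.card_nsmul_le_sum _ _ _ fun q hq => ?_
        exact hga q (hTP2 (Finset.mem_erase.mp hq).2)
      rw [Finset.card_erase_of_mem hxT, hTcard] at h2
      have : ((2 * d - 5 - 1 : ℕ) : ℤ) = ((2 * d - 6 : ℕ) : ℤ) := by congr 1
      rw [this] at h2
      linarith
    have hsub : insert p T ⊆ P2 A := by
      intro q hq
      rcases Finset.mem_insert.mp hq with rfl | hq
      · exact hpP2
      · exact hTP2 hq
    have hfinal : ∑ q ∈ insert p T, g (linesThrough A q) ≤ ∑ q ∈ P2 A, g (linesThrough A q) :=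
      Finset.sum_le_sum_of_subset_of_nonneg hsub fun q hq _ => hg0 q hq
    rw [Finset.sum_insert hpT, hltp] at hfinal
    have hcast : ((2 * d - 6 : ℕ) : ℤ) = 2 * (d : ℤ) - 6 := by
      have : (6 : ℕ) ≤ 2 * d := by omega
      push_cast [this]
      omega
    rw [hcast] at hsumT
    linarith
  · -- Case A : x not on any pencil line
    left
    push_neg at hxPen
    set T := imgL ∪ imgM with hT
    have hdisj : Disjoint imgL imgM := by
      rw [Finset.disjoint_left]
      intro q h1 h2
      obtain ⟨P, hP, hqP⟩ := (himgL_spec q h1).2.2.2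
      rw [hinter q h1 h2] at hqP
      exact hxPen P hP hqP
    have hTcard : T.card = 2 * d - 4 := by
      rw [hT, Finset.card_union_of_disjoint hdisj, hcardL, hcardM]
      omega
    have hTP2 : T ⊆ P2 A := by
      intro q hq
      rcases Finset.mem_union.mp hq with h | h
      · exact (himgL_spec q h).1
      · exact (himgM_spec q h).1
    have hpT : p ∉ T := by
      intro hq
      rcases Finset.mem_union.mp hq with h | h
      · exact (himgL_spec p h).2.2.1 rfl
      · exact (himgM_spec p h).2.2.1 rfl
    have hxT : x ∉ T := by
      intro hq
      rcases Finset.mem_union.mp hq with h | h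
      · obtain ⟨P, hP, hqP⟩ := (himgL_spec x h).2.2.2
        exact hxPen P hP hqP
      · obtain ⟨P, hP, hqP⟩ := (himgM_spec x h).2.2.2
        exact hxPen P hP hqP
    have hsumT : ((2 * d - 4 : ℕ) : ℤ) * a ≤ ∑ q ∈ T, g (linesThrough A q) := by
      rw [← hTcard, ← nsmul_eq_mul]
      refine Finset.card_nsmul_le_sum _ _ _ fun q hq => hga q (hTP2 hq)
    have hsub : insert p (insert x T) ⊆ P2 A := by
      intro q hq
      rcases Finset.mem_insert.mp hq with rfl | hq
      · exact hpP2
      · rcases Finset.mem_insert.mp hq with rfl | hq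
        · exact hxP2
        · exact hTP2 hq
    have hpxT : p ∉ insert x T := by
      intro hq
      rcases Finset.mem_insert.mp hq with h | h
      · exact hpx h
      · exact hpT h
    have hfinal : ∑ q ∈ insert p (insert x T), g (linesThrough A q)
        ≤ ∑ q ∈ P2 A, g (linesThrough A q) :=
      Finset.sum_le_sum_of_subset_of_nonneg hsub fun q hq _ => hg0 q hq
    rw [Finset.sum_insert hpxT, Finset.sum_insert hxT, hltp] at hfinal
    have hax : a ≤ g (linesThrough A x) := hga x hxP2
    have hcast : ((2 * d - 4 : ℕ) : ℤ) = 2 * (d : ℤ) - 4 := by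
      have : (4 : ℕ) ≤ 2 * d := by omega
      push_cast [this]
      omega
    rw [hcast] at hsumT
    linarith

lemma ptsOn_card_split {A : Finset (ProjPlane k)} {L : ProjPlane k} :
    (ptsOn A L).card = ((ptsOn A L).filter (fun q => 3 ≤ linesThrough A q)).card
      + ((ptsOn A L).filter (fun q => linesThrough A q = 2)).card := by
  rw [← Finset.card_filter_add_card_filter_not
    (s := ptsOn A L) (p := fun q => 3 ≤ linesThrough A q)]
  congr 2
  ext q
  simp only [mem_filter, ptsOn, mem_P2]
  constructor
  · rintro ⟨⟨h1, h2⟩, h3⟩; exact ⟨⟨h1, h2⟩, by omega⟩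
  · rintro ⟨⟨h1, h2⟩, h3⟩; exact ⟨⟨h1, h2⟩, by omega⟩

lemma sum_P2_erase' {A : Finset (ProjPlane k)} {L : ProjPlane k} (hL : L ∈ A)
    (f : ℕ → ℤ) (c : ℤ) (hstep : ∀ m, 3 ≤ m → f m = f (m - 1) + c) :
    ∑ q ∈ P2 A, f (linesThrough A q)
      = ∑ q ∈ P2 (A.erase L), f (linesThrough (A.erase L) q)
        + c * (((ptsOn A L).filter (fun q => 3 ≤ linesThrough A q)).card : ℤ)
        + (((ptsOn A L).filter (fun q => linesThrough A q = 2)).card : ℤ) * f 2 := by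
  have hsub : ptsOn A L ⊆ P2 A := filter_subset _ _
  rw [sum_P2_erase hL f]
  rw [← Finset.sum_sdiff hsub (f := fun q => f (linesThrough A q))]
  rw [ptsOn_partition f]
  have : ∑ q ∈ (ptsOn A L).filter (fun q => 3 ≤ linesThrough A q), f (linesThrough A q)
      = ∑ q ∈ (ptsOn A L).filter (fun q => 3 ≤ linesThrough A q), f (linesThrough A q - 1)
        + c * (((ptsOn A L).filter (fun q => 3 ≤ linesThrough A q)).card : ℤ) := by
    rw [Finset.sum_congr rfl (fun q hq => hstep _ (mem_filter.mp hq).2),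
      Finset.sum_add_distrib, Finset.sum_const, nsmul_eq_mul, mul_comm]
  rw [this]
  ring

/-- The main combinatorial estimate, proved by induction on the number of lines. -/
lemma core : ∀ d : ℕ, ∀ A : Finset (ProjPlane k), A.card = d → 4 ≤ A.card →
    (∀ q, linesThrough A q + 2 ≤ A.card) →
    (2 * (A.card : ℤ) - 2 ≤ ∑ q ∈ P2 A, ((linesThrough A q : ℤ) - 1))
    ∧ (5 * (A.card : ℤ) - 8 ≤ ∑ q ∈ P2 A, (3 * (linesThrough A q : ℤ) - 4)) := by
  intro d
  induction d using Nat.strong_induction_on with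
  | _ d ih =>
  intro A hAd hd4 hmax
  by_cases hdir : ∃ p, linesThrough A p + 2 = A.card
  · -- direct case: a point of multiplicity d - 2
    obtain ⟨p, hp⟩ := hdir
    constructor
    · have := direct_sum_bound hd4 hmax hp (fun m => (m : ℤ) - 1) 1 2
        (fun m hm => by push_cast; omega) (fun m hm => by push_cast; omega) (by norm_num)
      have hc : ((A.card - 2 : ℕ) : ℤ) = (A.card : ℤ) - 2 := by omega
      rcases this with h | ⟨h5, h⟩
      · beta_reduce at h; rw [hc] at h; linarith
      · beta_reduce at h; rw [hc] at h
        have : (5 : ℤ) ≤ (A.card : ℤ) := by exact_mod_cast h5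
        linarith
    · have := direct_sum_bound hd4 hmax hp (fun m => 3 * (m : ℤ) - 4) 2 5
        (fun m hm => by push_cast; omega) (fun m hm => by push_cast; omega) (by norm_num)
      have hc : ((A.card - 2 : ℕ) : ℤ) = (A.card : ℤ) - 2 := by omega
      rcases this with h | ⟨h5, h⟩
      · beta_reduce at h; rw [hc] at h; linarith
      · beta_reduce at h; rw [hc] at h
        have : (5 : ℤ) ≤ (A.card : ℤ) := by exact_mod_cast h5
        linarith
  · -- inductive case: all multiplicities are ≤ d - 3
    push_neg at hdir
    have hmax3 : ∀ q, linesThrough A q + 3 ≤ A.card := by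
      intro q
      have h1 := hmax q
      have h2 := hdir q
      omega
    -- d ≥ 5
    have hd5 : 5 ≤ A.card := by
      obtain ⟨L₁, hL₁, L₂, hL₂, hne⟩ := Finset.one_lt_card.mp (show 1 < A.card by omega)
      have := interPt_mem_P2 hL₁ hL₂ hne
      have h2 := mem_P2.mp this
      have := hmax3 (interPt L₁ L₂)
      omega
    obtain ⟨L, hLA, hr3⟩ := exists_good_line hmax3 (by omega)
    set B := A.erase L with hB
    have hBcard : B.card = d - 1 := by rw [hB, card_erase_of_mem hLA, hAd]
    have hmultB : ∀ q, linesThrough B q ≤ linesThrough A q := by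
      intro q
      rw [linesThrough_eq, linesThrough_eq]
      apply card_le_card
      intro N hN
      rw [lsF, mem_filter] at hN ⊢
      exact ⟨Finset.erase_subset _ _ hN.1, hN.2⟩
    have hmaxB : ∀ q, linesThrough B q + 2 ≤ B.card := by
      intro q
      have := hmax3 q
      have := hmultB q
      omega
    have hIH := ih (d - 1) (by omega) B hBcard (by omega) hmaxB
    -- bookkeeping
    set s₃ := ((ptsOn A L).filter (fun q => 3 ≤ linesThrough A q)).card with hs₃
    set r₂ := ((ptsOn A L).filter (fun q => linesThrough A q = 2)).card with hr₂
    have hsplit : (ptsOn A L).card = s₃ + r₂ := ptsOn_card_split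
    constructor
    · have he := sum_P2_erase' hLA (fun m => (m : ℤ) - 1) 1
        (fun m hm => by push_cast [show 1 ≤ m by omega]; ring)
      beta_reduce at he
      rw [← hB, ← hs₃, ← hr₂] at he
      push_cast at he

      have h1 := hIH.1
      rw [hBcard, show ((d - 1 : ℕ) : ℤ) = (d : ℤ) - 1 by omega] at h1
      rw [show ((A.card : ℕ) : ℤ) = (d : ℤ) by rw [hAd]]
      have hge : (3 : ℤ) ≤ (s₃ : ℤ) + (r₂ : ℤ) := by
        have h' : (3 : ℤ) ≤ ((ptsOn A L).card : ℤ) := by exact_mod_cast hr3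
        rw [hsplit] at h'
        push_cast at h'
        linarith
      linarith [he, h1, hge]
    · have he := sum_P2_erase' hLA (fun m => 3 * (m : ℤ) - 4) 3
        (fun m hm => by push_cast [show 1 ≤ m by omega]; ring)
      beta_reduce at he
      rw [← hB, ← hs₃, ← hr₂] at he
      push_cast at he

      have h1 := hIH.2
      rw [hBcard, show ((d - 1 : ℕ) : ℤ) = (d : ℤ) - 1 by omega] at h1
      rw [show ((A.card : ℕ) : ℤ) = (d : ℤ) by rw [hAd]]
      have hge : (3 : ℤ) ≤ (s₃ : ℤ) + (r₂ : ℤ) := by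
        have h' : (3 : ℤ) ≤ ((ptsOn A L).card : ℤ) := by exact_mod_cast hr3
        rw [hsplit] at h'
        push_cast at h'
        linarith
      have hs0 : (0 : ℤ) ≤ (s₃ : ℤ) := by positivity
      linarith [he, h1, hge, hs0]
end Comb


/-- An arrangement of `d ≥ 4` lines with `t_d = t_{d-1} = 0` has positive Chern
numbers: `c̄₁² ≥ 1` and `c̄₂ ≥ 1`. -/
theorem stmt_7 {k : Type*} [Field k] (A : Finset (ProjPlane k))
    (hd : 4 ≤ A.card) (h1 : tm A A.card = 0) (h2 : tm A (A.card - 1) = 0) :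
    1 ≤ c1sq A ∧ 1 ≤ c2 A := by
  classical
  have hmax : ∀ p, linesThrough A p + 2 ≤ A.card := by
    intro p
    have hle : linesThrough A p ≤ A.card := Comb.linesThrough_le A p
    have hne1 : linesThrough A p ≠ A.card := by
      intro h
      have hp2 : p ∈ Comb.P2 A := Comb.mem_P2.mpr (by omega)
      have hmem : p ∈ (Comb.P2 A).filter (fun q => linesThrough A q = A.card) :=
        Finset.mem_filter.mpr ⟨hp2, h⟩
      have := Finset.card_ne_zero_of_mem hmem
      rw [← Comb.tm_eq (by omega)] at this
      exact this h1
    have hne2 : linesThrough A p ≠ A.card - 1 := by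
      intro h
      have hp2 : p ∈ Comb.P2 A := Comb.mem_P2.mpr (by omega)
      have hmem : p ∈ (Comb.P2 A).filter (fun q => linesThrough A q = A.card - 1) :=
        Finset.mem_filter.mpr ⟨hp2, h⟩
      have := Finset.card_ne_zero_of_mem hmem
      rw [← Comb.tm_eq (by omega)] at this
      exact this h2
    omega
  have hcore := Comb.core A.card A rfl hd hmax
  have hd4 : (4 : ℤ) ≤ (A.card : ℤ) := by exact_mod_cast hd
  constructor
  · have hs := Comb.sum_tm A (fun m => 3 * (m : ℤ) - 4)
    beta_reduce at hs
    rw [c1sq, hs]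
    linarith [hcore.2]
  · have hs := Comb.sum_tm A (fun m => (m : ℤ) - 1)
    beta_reduce at hs
    rw [c2, hs]
    linarith [hcore.1]
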